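/- Let ρ and ρ' be states on ℂ^d whose trace distance satisfies Tr(ρ − ρ')₊ ≤ δ for some δ > 0, let σ be a positive definite d×d matrix, and let ε ∈ (0,1) with ε + δ < 1. Then D̲_s^ε(ρ'‖σ) ≤ D̲_s^{ε+δ}(ρ‖σ). -/

import Mathlib

open Matrix
open scoped ComplexOrder

noncomputable section

/-- Positive part `C₊` of a Hermitian matrix, obtained by applying `x ↦ max x 0` to the
eigenvalues in a spectral decomposition (junk value `0` for non-Hermitian input). -/
def matPos {n : Type*} [Fintype n] [DecidableEq n] (A : Matrix n n ℂ) : Matrix n n ℂ :=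
  if hA : A.IsHermitian then
    (hA.eigenvectorUnitary : Matrix n n ℂ) *
      Matrix.diagonal (fun i => ((max (hA.eigenvalues i) 0 : ℝ) : ℂ)) *
      star (hA.eigenvectorUnitary : Matrix n n ℂ)
  else 0

/-- `Tr C₊` as a real number. -/
def trPos {n : Type*} [Fintype n] [DecidableEq n] (A : Matrix n n ℂ) : ℝ :=
  (matPos A).trace.re

/-- Spectral projection of a Hermitian matrix onto `[0, ∞)` (junk value `0` for
non-Hermitian input). -/
def projNonneg {n : Type*} [Fintype n] [DecidableEq n] (A : Matrix n n ℂ) : Matrix n n ℂ :=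
  if hA : A.IsHermitian then
    (hA.eigenvectorUnitary : Matrix n n ℂ) *
      Matrix.diagonal (fun i => if 0 ≤ hA.eigenvalues i then (1 : ℂ) else 0) *
      star (hA.eigenvectorUnitary : Matrix n n ℂ)
  else 0

/-- The information spectrum relative entropy `D̲_s^ε(ρ‖σ)`. -/
def Dlow {n : Type*} [Fintype n] [DecidableEq n] (ε : ℝ) (ρ σ : Matrix n n ℂ) : ℝ :=
  sSup {γ : ℝ | 1 - ε ≤ trPos (ρ - (2 : ℝ) ^ γ • σ)}

/-- The information spectrum relative entropy `D̄_s^ε(ρ‖σ)`. -/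
def Dhigh {n : Type*} [Fintype n] [DecidableEq n] (ε : ℝ) (ρ σ : Matrix n n ℂ) : ℝ :=
  sInf {γ : ℝ | trPos (ρ - (2 : ℝ) ^ γ • σ) ≤ ε}


namespace SpecAux

variable {n : Type*} [Fintype n] [DecidableEq n]

def spec {A : Matrix n n ℂ} (hA : A.IsHermitian) (f : ℝ → ℝ) : Matrix n n ℂ :=
  (hA.eigenvectorUnitary : Matrix n n ℂ) *
    Matrix.diagonal (fun i => ((f (hA.eigenvalues i) : ℝ) : ℂ)) *
    star (hA.eigenvectorUnitary : Matrix n n ℂ)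

lemma spec_id {A : Matrix n n ℂ} (hA : A.IsHermitian) : spec hA id = A := by
  rw [spec]
  exact (hA.spectral_theorem).symm

lemma spec_one {A : Matrix n n ℂ} (hA : A.IsHermitian) : spec hA (fun _ => 1) = 1 := by
  simp only [spec, Complex.ofReal_one, Matrix.diagonal_one, mul_one]
  exact (Matrix.mem_unitaryGroup_iff).mp hA.eigenvectorUnitary.2

lemma spec_sub {A : Matrix n n ℂ} (hA : A.IsHermitian) (f g : ℝ → ℝ) :
    spec hA f - spec hA g = spec hA (f - g) := by
  simp only [spec, ← Matrix.sub_mul, ← Matrix.mul_sub, Matrix.diagonal_sub]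
  congr 2
  ext i j
  simp [Matrix.diagonal, Pi.sub_apply]

lemma spec_posSemidef {A : Matrix n n ℂ} (hA : A.IsHermitian) {f : ℝ → ℝ}
    (hf : ∀ i, 0 ≤ f (hA.eigenvalues i)) : (spec hA f).PosSemidef := by
  rw [spec, Matrix.star_eq_conjTranspose]
  exact (Matrix.PosSemidef.diagonal (fun i => by
    simpa using Complex.zero_le_real.mpr (hf i))).mul_mul_conjTranspose_same _

lemma trace_spec {A : Matrix n n ℂ} (hA : A.IsHermitian) (f : ℝ → ℝ) :
    (spec hA f).trace = ((∑ i, f (hA.eigenvalues i) : ℝ) : ℂ) := by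
  rw [spec, Matrix.trace_mul_cycle, Unitary.coe_star_mul_self, one_mul, Matrix.trace_diagonal]
  push_cast
  rfl

lemma spec_mul {A : Matrix n n ℂ} (hA : A.IsHermitian) (f g : ℝ → ℝ) :
    spec hA f * spec hA g = spec hA (f * g) := by
  rw [spec, spec, spec]
  have h1 : (star (hA.eigenvectorUnitary : Matrix n n ℂ)) *
      (hA.eigenvectorUnitary : Matrix n n ℂ) = 1 := Unitary.coe_star_mul_self _
  have key : ∀ D E : Matrix n n ℂ,
      (hA.eigenvectorUnitary : Matrix n n ℂ) * D * star (hA.eigenvectorUnitary : Matrix n n ℂ) *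
        ((hA.eigenvectorUnitary : Matrix n n ℂ) * E * star (hA.eigenvectorUnitary : Matrix n n ℂ))
      = (hA.eigenvectorUnitary : Matrix n n ℂ) * (D * E) *
          star (hA.eigenvectorUnitary : Matrix n n ℂ) := by
    intro D E
    calc _ = (hA.eigenvectorUnitary : Matrix n n ℂ) * D *
        (star (hA.eigenvectorUnitary : Matrix n n ℂ) * (hA.eigenvectorUnitary : Matrix n n ℂ)) *
        E * star (hA.eigenvectorUnitary : Matrix n n ℂ) := by
          simp only [Matrix.mul_assoc]
      _ = _ := by rw [h1, mul_one]; simp only [Matrix.mul_assoc]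
  rw [key, Matrix.diagonal_mul_diagonal]
  congr 2
  ext i j
  simp [Matrix.diagonal]

end SpecAux

namespace SpecAux

variable {n : Type*} [Fintype n] [DecidableEq n]

lemma spec_smul {A : Matrix n n ℂ} (hA : A.IsHermitian) (r : ℝ) (f : ℝ → ℝ) :
    r • spec hA f = spec hA (fun x => r * f x) := by
  rw [spec, spec, ← Matrix.smul_mul, ← Matrix.mul_smul]
  congr 2
  ext i j
  simp only [Matrix.smul_apply, Matrix.diagonal, Matrix.of_apply]
  split <;> simp [Complex.real_smul]

lemma smul_posSemidef {M : Matrix n n ℂ} (hM : M.PosSemidef) {r : ℝ} (hr : 0 ≤ r) :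
    (r • M).PosSemidef := by
  refine Matrix.PosSemidef.of_dotProduct_mulVec_nonneg ?_ ?_
  · rw [Matrix.IsHermitian, Matrix.conjTranspose_smul, star_trivial, hM.1]
  · intro x
    rw [Matrix.smul_mulVec, dotProduct_smul, Complex.real_smul]
    exact mul_nonneg (by exact_mod_cast hr) (hM.dotProduct_mulVec_nonneg x)

lemma re_trace_mul_psd_nonneg {P X : Matrix n n ℂ} (hP : P.PosSemidef) (hX : X.PosSemidef) :
    0 ≤ ((P * X).trace).re := by
  obtain ⟨B, hB⟩ : ∃ B : Matrix n n ℂ, X = Bᴴ * B := by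
    open scoped MatrixOrder Matrix.Norms.L2Operator in
    obtain ⟨B, hB⟩ := CStarAlgebra.nonneg_iff_eq_star_mul_self.mp hX.nonneg
    exact ⟨B, hB⟩
  have hM : (B * P * Bᴴ).PosSemidef := hP.mul_mul_conjTranspose_same B
  have e : (P * X).trace = (B * P * Bᴴ).trace := by
    rw [hB, ← Matrix.mul_assoc, Matrix.trace_mul_cycle]
  rw [e, Matrix.trace]
  rw [Complex.re_sum]
  refine Finset.sum_nonneg fun i _ => ?_
  have := hM.dotProduct_mulVec_nonneg (Pi.single i 1)
  have h2 : (star (Pi.single i 1) ⬝ᵥ (B * P * Bᴴ) *ᵥ Pi.single i 1) = (B * P * Bᴴ) i i := by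
    simp [dotProduct, Matrix.mulVec, Pi.single_apply, Finset.sum_ite_eq]
  rw [h2] at this
  simpa [Matrix.diag] using (Complex.le_def.mp this).1

end SpecAux

section Main

open SpecAux

variable {n : Type*} [Fintype n] [DecidableEq n]

lemma matPos_eq {A : Matrix n n ℂ} (hA : A.IsHermitian) :
    matPos A = spec hA (fun x => max x 0) := by
  rw [matPos, dif_pos hA, spec]

lemma projNonneg_eq {A : Matrix n n ℂ} (hA : A.IsHermitian) :
    projNonneg A = spec hA (fun x => if 0 ≤ x then 1 else 0) := by
  rw [projNonneg, dif_pos hA, spec]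
  congr 2
  ext i j
  simp only [Matrix.diagonal, Matrix.of_apply]
  split
  · split <;> simp
  · rfl

lemma trPos_eq {A : Matrix n n ℂ} (hA : A.IsHermitian) :
    trPos A = ∑ i, max (hA.eigenvalues i) 0 := by
  rw [trPos, matPos_eq hA, trace_spec, Complex.ofReal_re]

lemma matPos_posSemidef {A : Matrix n n ℂ} (hA : A.IsHermitian) : (matPos A).PosSemidef := by
  rw [matPos_eq hA]; exact spec_posSemidef hA fun i => le_max_right _ _

lemma matPos_sub_self_posSemidef {A : Matrix n n ℂ} (hA : A.IsHermitian) :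
    (matPos A - A).PosSemidef := by
  rw [matPos_eq hA]
  nth_rewrite 2 [← spec_id hA]
  rw [spec_sub]
  exact spec_posSemidef hA fun i => by
    simp [Pi.sub_apply, sub_nonneg, le_max_left]

lemma projNonneg_posSemidef {A : Matrix n n ℂ} (hA : A.IsHermitian) :
    (projNonneg A).PosSemidef := by
  rw [projNonneg_eq hA]
  exact spec_posSemidef hA fun i => by positivity

lemma one_sub_projNonneg_posSemidef {A : Matrix n n ℂ} (hA : A.IsHermitian) :
    ((1 : Matrix n n ℂ) - projNonneg A).PosSemidef := by
  rw [projNonneg_eq hA, ← spec_one hA, spec_sub]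
  refine spec_posSemidef hA fun i => ?_
  simp only [Pi.sub_apply]
  split <;> norm_num

lemma re_trace_projNonneg_mul {A : Matrix n n ℂ} (hA : A.IsHermitian) :
    ((projNonneg A * A).trace).re = trPos A := by
  have : projNonneg A * A = spec hA ((fun x => if 0 ≤ x then 1 else 0) * id) := by
    rw [projNonneg_eq hA]
    nth_rewrite 2 [← spec_id hA]
    rw [spec_mul]
  rw [this, trace_spec, Complex.ofReal_re, trPos_eq hA]
  refine Finset.sum_congr rfl fun i _ => ?_
  simp only [Pi.mul_apply, id]
  split
  · rw [one_mul, max_eq_left (by assumption)]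
  · rw [zero_mul, max_eq_right (le_of_not_ge (by assumption))]

/-- Key: for `0 ≤ P ≤ 1` and Hermitian `X`, `Re Tr (P X) ≤ Tr X₊`. -/
lemma re_trace_mul_le_trPos {P X : Matrix n n ℂ} (hX : X.IsHermitian)
    (hP : P.PosSemidef) (hP1 : ((1 : Matrix n n ℂ) - P).PosSemidef) :
    ((P * X).trace).re ≤ trPos X := by
  have hXp := matPos_posSemidef hX
  have h2 := matPos_sub_self_posSemidef hX
  have e1 : P * X = P * matPos X - P * (matPos X - X) := by
    rw [← Matrix.mul_sub, sub_sub_cancel]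
  have e2 : P * matPos X = matPos X - ((1 : Matrix n n ℂ) - P) * matPos X := by
    rw [Matrix.sub_mul, Matrix.one_mul, sub_sub_cancel]
  calc ((P * X).trace).re
      = ((P * matPos X).trace).re - ((P * (matPos X - X)).trace).re := by
        rw [e1, Matrix.trace_sub, Complex.sub_re]
    _ ≤ ((P * matPos X).trace).re :=
        sub_le_self _ (re_trace_mul_psd_nonneg hP h2)
    _ = ((matPos X).trace).re - ((((1 : Matrix n n ℂ) - P) * matPos X).trace).re := by
        rw [e2, Matrix.trace_sub, Complex.sub_re]
    _ ≤ ((matPos X).trace).re :=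
        sub_le_self _ (re_trace_mul_psd_nonneg hP1 hXp)
    _ = trPos X := rfl

lemma trPos_add_le {X Y : Matrix n n ℂ} (hX : X.IsHermitian) (hY : Y.IsHermitian) :
    trPos (X + Y) ≤ trPos X + trPos Y := by
  have hXY : (X + Y).IsHermitian := hX.add hY
  have hPpsd := projNonneg_posSemidef hXY
  have h1P := one_sub_projNonneg_posSemidef hXY
  calc trPos (X + Y) = ((projNonneg (X + Y) * (X + Y)).trace).re :=
        (re_trace_projNonneg_mul hXY).symm
    _ = ((projNonneg (X + Y) * X).trace).re + ((projNonneg (X + Y) * Y).trace).re := by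
        rw [Matrix.mul_add, Matrix.trace_add, Complex.add_re]
    _ ≤ trPos X + trPos Y :=
        add_le_add (re_trace_mul_le_trPos hX hPpsd h1P) (re_trace_mul_le_trPos hY hPpsd h1P)

lemma trPos_mono {A B : Matrix n n ℂ} (hA : A.IsHermitian) (hB : B.IsHermitian)
    (hBA : (B - A).PosSemidef) : trPos A ≤ trPos B := by
  have hPpsd := projNonneg_posSemidef hA
  have h1P := one_sub_projNonneg_posSemidef hA
  calc trPos A = ((projNonneg A * A).trace).re := (re_trace_projNonneg_mul hA).symm
    _ = ((projNonneg A * B).trace).re - ((projNonneg A * (B - A)).trace).re := by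
        rw [← Complex.sub_re, ← Matrix.trace_sub, ← Matrix.mul_sub, sub_sub_cancel]
    _ ≤ ((projNonneg A * B).trace).re := sub_le_self _ (re_trace_mul_psd_nonneg hPpsd hBA)
    _ ≤ trPos B := re_trace_mul_le_trPos hB hPpsd h1P

lemma sum_eigenvalues_eq_re_trace {A : Matrix n n ℂ} (hA : A.IsHermitian) :
    ∑ i, hA.eigenvalues i = A.trace.re := by
  have := trace_spec hA id
  rw [spec_id hA] at this
  rw [this, Complex.ofReal_re]
  rfl

lemma trPos_zero : trPos (0 : Matrix n n ℂ) = 0 := by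
  have h0 : (0 : Matrix n n ℂ).IsHermitian := Matrix.isHermitian_zero
  have hnn : ∀ i, 0 ≤ h0.eigenvalues i := fun i =>
    (Matrix.PosSemidef.zero (n := n) (R := ℂ)).eigenvalues_nonneg i
  have hsum : ∑ i, h0.eigenvalues i = 0 := by
    rw [sum_eigenvalues_eq_re_trace h0, Matrix.trace_zero, Complex.zero_re]
  rw [trPos_eq h0]
  rw [Finset.sum_congr rfl fun i _ => max_eq_left (hnn i)]
  exact hsum

lemma re_trace_le_trPos {A : Matrix n n ℂ} (hA : A.IsHermitian) : A.trace.re ≤ trPos A := by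
  rw [← sum_eigenvalues_eq_re_trace hA, trPos_eq hA]
  exact Finset.sum_le_sum fun i _ => le_max_left _ _

lemma trPos_le_trPos_neg {A : Matrix n n ℂ} (hA : A.IsHermitian) (htr : A.trace = 0) :
    trPos A ≤ trPos (-A) := by
  have hPpsd := projNonneg_posSemidef hA
  have h1P := one_sub_projNonneg_posSemidef hA
  have hnA : (-A).IsHermitian := hA.neg
  have e : (((1 : Matrix n n ℂ) - projNonneg A) * (-A)).trace
      = (projNonneg A * A).trace := by
    rw [Matrix.mul_neg, Matrix.trace_neg, Matrix.sub_mul, Matrix.one_mul, Matrix.trace_sub,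
      htr, zero_sub, neg_neg]
  have h1P1 : ((1 : Matrix n n ℂ) - ((1 : Matrix n n ℂ) - projNonneg A)).PosSemidef := by
    rw [sub_sub_cancel]; exact hPpsd
  calc trPos A = ((projNonneg A * A).trace).re := (re_trace_projNonneg_mul hA).symm
    _ = ((((1 : Matrix n n ℂ) - projNonneg A) * (-A)).trace).re := by rw [e]
    _ ≤ trPos (-A) := re_trace_mul_le_trPos hnA h1P h1P1

end Main


/-- If the trace distance `Tr(ρ − ρ')₊` of two states is at most `δ`, then
`D̲_s^ε(ρ'‖σ) ≤ D̲_s^{ε+δ}(ρ‖σ)`. -/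
theorem Dlow_perturbation {d : ℕ} (ρ ρ' σ : Matrix (Fin d) (Fin d) ℂ)
    (hρ : ρ.PosSemidef) (hρtr : ρ.trace = 1)
    (hρ' : ρ'.PosSemidef) (hρ'tr : ρ'.trace = 1)
    (hσ : σ.PosDef) (δ : ℝ) (hδ : 0 < δ) (hdist : trPos (ρ - ρ') ≤ δ)
    (ε : ℝ) (hε0 : 0 < ε) (hε1 : ε < 1) (hεδ : ε + δ < 1) :
    Dlow ε ρ' σ ≤ Dlow (ε + δ) ρ σ := by
  have hd0 : d ≠ 0 := by
    rintro rfl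
    rw [Matrix.trace, Finset.univ_eq_empty, Finset.sum_empty] at hρtr
    exact zero_ne_one hρtr
  haveI : Nonempty (Fin d) := Fin.pos_iff_nonempty.mp (Nat.pos_of_ne_zero hd0)
  have hρh : ρ.IsHermitian := hρ.1
  have hρ'h : ρ'.IsHermitian := hρ'.1
  have hsm : ∀ γ : ℝ, (((2 : ℝ) ^ γ) • σ).PosSemidef := fun γ =>
    SpecAux.smul_posSemidef hσ.posSemidef (Real.rpow_nonneg (by norm_num) γ)
  -- trace distance symmetry
  have hswap : trPos (ρ' - ρ) ≤ δ := by
    have h1 : (ρ' - ρ).IsHermitian := hρ'h.sub hρh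
    have htr0 : (ρ' - ρ).trace = 0 := by rw [Matrix.trace_sub, hρ'tr, hρtr, sub_self]
    calc trPos (ρ' - ρ) ≤ trPos (-(ρ' - ρ)) := trPos_le_trPos_neg h1 htr0
      _ = trPos (ρ - ρ') := by rw [neg_sub]
      _ ≤ δ := hdist
  -- inclusion of the two sets
  have hsub : {γ : ℝ | 1 - ε ≤ trPos (ρ' - (2 : ℝ) ^ γ • σ)} ⊆
      {γ : ℝ | 1 - (ε + δ) ≤ trPos (ρ - (2 : ℝ) ^ γ • σ)} := by
    intro γ hγ
    simp only [Set.mem_setOf_eq] at hγ ⊢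
    have e : ρ' - (2 : ℝ) ^ γ • σ = (ρ - (2 : ℝ) ^ γ • σ) + (ρ' - ρ) := by abel
    rw [e] at hγ
    have h2 := trPos_add_le (hρh.sub (hsm γ).1) (hρ'h.sub hρh)
    linarith
  -- trace of σ is positive
  have htrσ : 0 < σ.trace.re := by
    rw [← sum_eigenvalues_eq_re_trace hσ.1]
    exact Finset.sum_pos (fun i _ => hσ.eigenvalues_pos i) Finset.univ_nonempty
  -- the first set is nonempty
  have hne : {γ : ℝ | 1 - ε ≤ trPos (ρ' - (2 : ℝ) ^ γ • σ)}.Nonempty := by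
    refine ⟨Real.logb 2 (ε / σ.trace.re), ?_⟩
    have hc : (2 : ℝ) ^ Real.logb 2 (ε / σ.trace.re) = ε / σ.trace.re :=
      Real.rpow_logb (by norm_num) (by norm_num) (div_pos hε0 htrσ)
    simp only [Set.mem_setOf_eq]
    have hherm : (ρ' - (2 : ℝ) ^ Real.logb 2 (ε / σ.trace.re) • σ).IsHermitian :=
      hρ'h.sub (hsm _).1
    refine le_trans ?_ (re_trace_le_trPos hherm)
    rw [Matrix.trace_sub, Matrix.trace_smul, hρ'tr, Complex.sub_re, Complex.one_re,
      Complex.smul_re, hc, smul_eq_mul, div_mul_cancel₀ _ (ne_of_gt htrσ)]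
  -- the second set is bounded above
  have hbdd : BddAbove {γ : ℝ | 1 - (ε + δ) ≤ trPos (ρ - (2 : ℝ) ^ γ • σ)} := by
    have hne' : (Finset.univ : Finset (Fin d)).Nonempty := Finset.univ_nonempty
    set μ := Finset.univ.inf' hne' hσ.1.eigenvalues with hμdef
    have hμpos : 0 < μ := (Finset.lt_inf'_iff hne').mpr fun i _ => hσ.eigenvalues_pos i
    have hσμ : (σ - μ • (1 : Matrix (Fin d) (Fin d) ℂ)).PosSemidef := by
      have e1 : μ • (1 : Matrix (Fin d) (Fin d) ℂ) = SpecAux.spec hσ.1 (fun _ => μ * 1) := by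
        rw [← SpecAux.spec_smul, SpecAux.spec_one]
      rw [e1]
      nth_rewrite 1 [← SpecAux.spec_id hσ.1]
      rw [SpecAux.spec_sub]
      refine SpecAux.spec_posSemidef _ fun i => ?_
      simp only [Pi.sub_apply, id, mul_one, sub_nonneg]
      exact Finset.inf'_le _ (Finset.mem_univ i)
    have hρ1 : ((1 : Matrix (Fin d) (Fin d) ℂ) - ρ).PosSemidef := by
      have e : (1 : Matrix (Fin d) (Fin d) ℂ) - ρ = SpecAux.spec hρh ((fun _ => 1) - id) := by
        rw [← SpecAux.spec_sub, SpecAux.spec_one, SpecAux.spec_id]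
      rw [e]
      refine SpecAux.spec_posSemidef _ fun i => ?_
      simp only [Pi.sub_apply, id, sub_nonneg]
      have hsum : ∑ j, hρh.eigenvalues j = 1 := by
        rw [sum_eigenvalues_eq_re_trace hρh, hρtr, Complex.one_re]
      calc hρh.eigenvalues i ≤ ∑ j, hρh.eigenvalues j :=
            Finset.single_le_sum (fun j _ => hρ.eigenvalues_nonneg j) (Finset.mem_univ i)
        _ = 1 := hsum
    set c := μ⁻¹ with hcdef
    have hcpos : 0 < c := inv_pos.mpr hμpos
    have hcσρ : (c • σ - ρ).PosSemidef := by
      have e : c • σ - ρ = c • (σ - μ • (1 : Matrix (Fin d) (Fin d) ℂ)) +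
          ((1 : Matrix (Fin d) (Fin d) ℂ) - ρ) := by
        rw [smul_sub, smul_smul, hcdef, inv_mul_cancel₀ (ne_of_gt hμpos), one_smul]
        abel
      rw [e]
      exact (SpecAux.smul_posSemidef hσμ hcpos.le).add hρ1
    refine ⟨Real.logb 2 c, fun γ hγ => ?_⟩
    simp only [Set.mem_setOf_eq] at hγ
    by_contra hlt
    push_neg at hlt
    have h2γ : c ≤ (2 : ℝ) ^ γ := by
      rw [← Real.rpow_logb (by norm_num : (0:ℝ) < 2) (by norm_num) hcpos]
      exact Real.rpow_le_rpow_of_exponent_le (by norm_num) hlt.le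
    have hpsd : ((2 : ℝ) ^ γ • σ - ρ).PosSemidef := by
      have e : (2 : ℝ) ^ γ • σ - ρ = ((2 : ℝ) ^ γ - c) • σ + (c • σ - ρ) := by
        rw [sub_smul]; abel
      rw [e]
      exact (SpecAux.smul_posSemidef hσ.posSemidef (sub_nonneg.mpr h2γ)).add hcσρ
    have hmono := trPos_mono (hρh.sub (hsm γ).1) Matrix.isHermitian_zero
      (by rw [zero_sub, neg_sub]; exact hpsd)
    rw [trPos_zero] at hmono
    linarith
  rw [Dlow, Dlow]
  exact csSup_le_csSup hbdd hne hsub
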